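/- Let γ > 0, n ∈ ℕ, and fix w ∈ 𝔻. Define h_w = ∏_{j=0}^{n-1}(γ+j+1)(γ+j+2)·l₁ − 2·∏_{j=0}^{n-1}(γ+j)(γ+j+2)·l₂ + ∏_{j=0}^{n-1}(γ+j)(γ+j+1)·l₃, where l_i(z) = (1-|w|²)^i/(1-conj(w)·z)^{γ+i-1}. Then h_w^{(n)}(w) = 0, h_w^{(n+1)}(w) = 0, and h_w^{(n+2)}(w) = 2·∏_{j=0}^{n-1}(γ+j)(γ+j+1)(γ+j+2) · conj(w)^{n+2}/(1-|w|²)^{γ+n+1}. -/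

import Mathlib

open Complex Metric Finset

/-- The kernel `l_i(z) = (1-|w|²)^i / (1 - conj w · z)^(γ+i-1)`. -/
noncomputable def lKernel (w : ℂ) (γ : ℝ) (i : ℕ) (z : ℂ) : ℂ :=
  ((1 - ‖w‖ ^ 2 : ℝ) : ℂ) ^ i / (1 - (starRingEnd ℂ) w * z) ^ ((γ : ℂ) + i - 1)

/-- The test function `h_w`. -/
noncomputable def hTest (w : ℂ) (γ : ℝ) (n : ℕ) (z : ℂ) : ℂ :=
  (∏ j ∈ range n, (((γ : ℂ) + j + 1) * ((γ : ℂ) + j + 2))) * lKernel w γ 1 z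
  - 2 * (∏ j ∈ range n, (((γ : ℂ) + j) * ((γ : ℂ) + j + 2))) * lKernel w γ 2 z
  + (∏ j ∈ range n, (((γ : ℂ) + j) * ((γ : ℂ) + j + 1))) * lKernel w γ 3 z

lemma key (c a b d s₁ s₂ s₃ : ℂ) (k : ℕ) :
    ∀ z : ℂ, (1 - c*z) ∈ Complex.slitPlane →
    iteratedDeriv k (fun z => a * (1 - c*z)^s₁ + b * (1-c*z)^s₂ + d*(1-c*z)^s₃) z =
      a * (∏ j ∈ range k, (s₁ - j)) * (-c)^k * (1-c*z)^(s₁ - k)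
    + b * (∏ j ∈ range k, (s₂ - j)) * (-c)^k * (1-c*z)^(s₂ - k)
    + d * (∏ j ∈ range k, (s₃ - j)) * (-c)^k * (1-c*z)^(s₃ - k) := by
  induction k with
  | zero => intro z hz; simp
  | succ k ih =>
    intro z hz
    rw [iteratedDeriv_succ]
    have hU : IsOpen {z : ℂ | (1 - c*z) ∈ Complex.slitPlane} :=
      Complex.isOpen_slitPlane.preimage (by fun_prop)
    have hev : iteratedDeriv k (fun z => a * (1 - c*z)^s₁ + b * (1-c*z)^s₂ + d*(1-c*z)^s₃)
        =ᶠ[nhds z] (fun z =>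
      a * (∏ j ∈ range k, (s₁ - j)) * (-c)^k * (1-c*z)^(s₁ - k)
    + b * (∏ j ∈ range k, (s₂ - j)) * (-c)^k * (1-c*z)^(s₂ - k)
    + d * (∏ j ∈ range k, (s₃ - j)) * (-c)^k * (1-c*z)^(s₃ - k)) :=
      Filter.eventually_of_mem (hU.mem_nhds hz) ih
    rw [hev.deriv_eq]
    have hb : HasDerivAt (fun z : ℂ => (1 - c*z)) (-c) z := by
      simpa using ((hasDerivAt_id z).const_mul c).const_sub 1
    have hcp : ∀ s : ℂ, HasDerivAt (fun z => (1-c*z)^s) (s * (1-c*z)^(s-1) * (-c)) z :=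
      fun s => hb.cpow_const hz
    have hd := (((hcp (s₁ - k)).const_mul (a * (∏ j ∈ range k, (s₁ - j)) * (-c)^k)).add
        ((hcp (s₂ - k)).const_mul (b * (∏ j ∈ range k, (s₂ - j)) * (-c)^k))).add
        ((hcp (s₃ - k)).const_mul (d * (∏ j ∈ range k, (s₃ - j)) * (-c)^k))
    erw [hd.deriv]
    have e : ∀ s : ℂ, s - ((k : ℂ) + 1) = s - k - 1 := fun s => by ring
    push_cast
    rw [e, e, e, prod_range_succ, prod_range_succ, prod_range_succ]
    ring

lemma main_k (γ : ℝ) (n : ℕ) (w : ℂ) (hw : w ∈ ball (0:ℂ) 1) (k : ℕ) :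
    iteratedDeriv k (hTest w γ n) w =
      ((∏ j ∈ range n, (((γ : ℂ) + j + 1) * ((γ : ℂ) + j + 2))) * (∏ j ∈ range k, ((γ:ℂ) + j))
      - 2 * (∏ j ∈ range n, (((γ : ℂ) + j) * ((γ : ℂ) + j + 2))) * (∏ j ∈ range k, ((γ:ℂ) + 1 + j))
      + (∏ j ∈ range n, (((γ : ℂ) + j) * ((γ : ℂ) + j + 1))) * (∏ j ∈ range k, ((γ:ℂ) + 2 + j)))
      * ((starRingEnd ℂ) w) ^ k
      * ((1 - ‖w‖ ^ 2 : ℝ) : ℂ) ^ ((1:ℂ) - γ - k) := by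
  set c := (starRingEnd ℂ) w with hc
  set R : ℂ := ((1 - ‖w‖ ^ 2 : ℝ) : ℂ) with hRdef
  have habs : ‖w‖ < 1 := by simpa using mem_ball_zero_iff.mp hw
  have hpos : (0:ℝ) < 1 - ‖w‖ ^ 2 := by nlinarith [norm_nonneg w]
  have hRne : R ≠ 0 := Complex.ofReal_ne_zero.mpr (ne_of_gt hpos)
  have hcw : (1:ℂ) - c * w = R := by
    rw [hc, hRdef, mul_comm, Complex.mul_conj, Complex.normSq_eq_norm_sq]
    push_cast; ring
  have hz : (1:ℂ) - c * w ∈ Complex.slitPlane := by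
    rw [hcw, hRdef]
    refine Or.inl ?_
    rw [Complex.ofReal_re]
    exact hpos
  set C1 := ∏ j ∈ range n, (((γ : ℂ) + j + 1) * ((γ : ℂ) + j + 2)) with hC1
  set C2 := ∏ j ∈ range n, (((γ : ℂ) + j) * ((γ : ℂ) + j + 2)) with hC2
  set C3 := ∏ j ∈ range n, (((γ : ℂ) + j) * ((γ : ℂ) + j + 1)) with hC3
  have hfun : hTest w γ n = fun z =>
      (C1 * R) * (1 - c*z) ^ (-(γ:ℂ)) + (-(2 * C2) * R^2) * (1 - c*z) ^ (-(γ:ℂ) - 1)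
      + (C3 * R^3) * (1 - c*z) ^ (-(γ:ℂ) - 2) := by
    funext z
    have e1 : (γ:ℂ) + (1:ℕ) - 1 = -(-(γ:ℂ)) := by push_cast; ring
    have e2 : (γ:ℂ) + (2:ℕ) - 1 = -(-(γ:ℂ) - 1) := by push_cast; ring
    have e3 : (γ:ℂ) + (3:ℕ) - 1 = -(-(γ:ℂ) - 2) := by push_cast; ring
    simp only [hTest, lKernel, e1, e2, e3, Complex.cpow_neg, ← hRdef, ← hc]
    field_simp
    ring
  rw [hfun, key c (C1*R) (-(2*C2)*R^2) (C3*R^3) (-(γ:ℂ)) (-(γ:ℂ)-1) (-(γ:ℂ)-2) k w hz, hcw]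
  have hprod : ∀ t : ℂ, (∏ j ∈ range k, (-t - (j:ℂ))) = (-1)^k * ∏ j ∈ range k, (t + j) := by
    intro t
    calc ∏ j ∈ range k, (-t - (j:ℂ)) = ∏ j ∈ range k, ((-1) * (t + (j:ℂ))) :=
          prod_congr rfl fun j _ => by ring
      _ = (-1)^k * ∏ j ∈ range k, (t + (j:ℂ)) := by
          rw [prod_mul_distrib, prod_const, card_range]
  have hpow : ∀ (i : ℕ) (e : ℂ), R ^ i * R ^ e = R ^ ((i:ℂ) + e) := by
    intro i e
    rw [Complex.cpow_add _ _ hRne, Complex.cpow_natCast]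
  have h1 : R * R ^ (-(γ:ℂ) - k) = R ^ ((1:ℂ) - γ - k) := by
    have := hpow 1 (-(γ:ℂ) - k); rw [pow_one] at this; rw [this]; ring_nf
  have h2 : R^2 * R ^ (-(γ:ℂ) - 1 - k) = R ^ ((1:ℂ) - γ - k) := by
    have := hpow 2 (-(γ:ℂ) - 1 - k); rw [this]; ring_nf
  have h3 : R^3 * R ^ (-(γ:ℂ) - 2 - k) = R ^ ((1:ℂ) - γ - k) := by
    have := hpow 3 (-(γ:ℂ) - 2 - k); rw [this]; ring_nf
  have hpr1 : (∏ j ∈ range k, (-(γ:ℂ) - (j:ℂ))) = (-1)^k * ∏ j ∈ range k, ((γ:ℂ) + j) := hprod γ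
  have hpr2 : (∏ j ∈ range k, (-(γ:ℂ) - 1 - (j:ℂ))) = (-1)^k * ∏ j ∈ range k, ((γ:ℂ) + 1 + j) := by
    have := hprod ((γ:ℂ)+1); rw [← this]; exact prod_congr rfl fun j _ => by ring
  have hpr3 : (∏ j ∈ range k, (-(γ:ℂ) - 2 - (j:ℂ))) = (-1)^k * ∏ j ∈ range k, ((γ:ℂ) + 2 + j) := by
    have := hprod ((γ:ℂ)+2); rw [← this]; exact prod_congr rfl fun j _ => by ring
  rw [hpr1, hpr2, hpr3, neg_pow c k]
  have hneg : ((-1:ℂ))^k * (-1)^k = 1 := by rw [← mul_pow]; norm_num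
  linear_combination (C1 * (∏ j ∈ range k, ((γ:ℂ) + j)) * ((-1:ℂ))^k * ((-1:ℂ))^k * c^k) * h1
    - (2 * C2 * (∏ j ∈ range k, ((γ:ℂ) + 1 + j)) * ((-1:ℂ))^k * ((-1:ℂ))^k * c^k) * h2
    + (C3 * (∏ j ∈ range k, ((γ:ℂ) + 2 + j)) * ((-1:ℂ))^k * ((-1:ℂ))^k * c^k) * h3
    + ((C1 * (∏ j ∈ range k, ((γ:ℂ) + j))
      - 2 * C2 * (∏ j ∈ range k, ((γ:ℂ) + 1 + j))
      + C3 * (∏ j ∈ range k, ((γ:ℂ) + 2 + j))) * c^k * R^((1:ℂ)-γ-(k:ℂ))) * hneg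

theorem hTest_derivs (γ : ℝ) (hγ : 0 < γ) (n : ℕ) (w : ℂ)
    (hw : w ∈ ball (0:ℂ) 1) :
    iteratedDeriv n (hTest w γ n) w = 0 ∧
    iteratedDeriv (n + 1) (hTest w γ n) w = 0 ∧
    iteratedDeriv (n + 2) (hTest w γ n) w =
      2 * (∏ j ∈ range n, (((γ : ℂ) + j) * ((γ : ℂ) + j + 1) * ((γ : ℂ) + j + 2))) *
        ((starRingEnd ℂ) w) ^ (n + 2) /
        ((1 - ‖w‖ ^ 2 : ℝ) : ℂ) ^ ((γ : ℂ) + n + 1) := by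
  set c := (starRingEnd ℂ) w with hc
  set R : ℂ := ((1 - ‖w‖ ^ 2 : ℝ) : ℂ) with hRdef
  clear_value c R
  set Q := ∏ j ∈ range n, (((γ : ℂ) + j) * ((γ : ℂ) + j + 1) * ((γ : ℂ) + j + 2)) with hQ
  have h1 : (∏ j ∈ range n, (((γ : ℂ) + j + 1) * ((γ : ℂ) + j + 2)))
      * (∏ j ∈ range n, ((γ:ℂ) + j)) = Q := by
    rw [hQ, ← prod_mul_distrib]; exact prod_congr rfl fun j _ => by ring
  have h2 : (∏ j ∈ range n, (((γ : ℂ) + j) * ((γ : ℂ) + j + 2)))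
      * (∏ j ∈ range n, ((γ:ℂ) + 1 + j)) = Q := by
    rw [hQ, ← prod_mul_distrib]; exact prod_congr rfl fun j _ => by ring
  have h3 : (∏ j ∈ range n, (((γ : ℂ) + j) * ((γ : ℂ) + j + 1)))
      * (∏ j ∈ range n, ((γ:ℂ) + 2 + j)) = Q := by
    rw [hQ, ← prod_mul_distrib]; exact prod_congr rfl fun j _ => by ring
  refine ⟨?_, ?_, ?_⟩
  · rw [main_k γ n w hw n, ← hRdef, ← hc]
    linear_combination (c^n * R^((1:ℂ)-γ-(n:ℂ))) * h1
      - 2 * (c^n * R^((1:ℂ)-γ-(n:ℂ))) * h2 + (c^n * R^((1:ℂ)-γ-(n:ℂ))) * h3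
  · rw [main_k γ n w hw (n+1), ← hRdef, ← hc]
    simp only [prod_range_succ]
    push_cast
    linear_combination (((γ:ℂ)+n) * c^(n+1) * R^((1:ℂ)-γ-((n:ℂ)+1))) * h1
      - 2 * (((γ:ℂ)+1+n) * c^(n+1) * R^((1:ℂ)-γ-((n:ℂ)+1))) * h2
      + (((γ:ℂ)+2+n) * c^(n+1) * R^((1:ℂ)-γ-((n:ℂ)+1))) * h3
  · rw [main_k γ n w hw (n+2), ← hRdef, ← hc]
    have hex : R ^ ((1:ℂ) - γ - ((n:ℕ)+2:ℕ)) = (R ^ ((γ:ℂ) + n + 1))⁻¹ := by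
      rw [← Complex.cpow_neg]; congr 1; push_cast; ring
    rw [hex, div_eq_mul_inv]
    simp only [prod_range_succ]
    push_cast
    set X := c^(n+2) * (R ^ ((γ:ℂ) + n + 1))⁻¹ with hX
    linear_combination (((γ:ℂ)+n) * ((γ:ℂ)+n+1) * X) * h1
      - 2 * (((γ:ℂ)+n+1) * ((γ:ℂ)+n+2) * X) * h2
      + (((γ:ℂ)+n+2) * ((γ:ℂ)+n+3) * X) * h3
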